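/- There exist a finite alphabet A and 2-variable quasi-regular languages P and Q over A such that the intersection P intersect Q is not quasi-regular. In particular, quasi-regular languages are not closed under intersection. -/

import Mathlib

/-- An `n`-tape semi-sorted (deterministic) asynchronous automaton over `A`:
a partial deterministic finite state automaton over `A ∪ {$}` (unique start state,
no `ε`-transitions, at most one transition from each state for each letter; the
padding symbol `$` is modelled by `none : Option A`), together with a partition of
its states into `n` sets (recorded by `tape`, where `tape s = i` means `s ∈ S_i`). -/
structure SemiSortedAA (A : Type) (n : ℕ) where
  State : Type
  fintype : Fintype State
  start : State
  accept : Set State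
  /-- partial deterministic transition function over the alphabet `A ∪ {$}` -/
  step : State → Option A → Option State
  /-- the index `i` such that the state lies in `S_i` -/
  tape : State → Fin n

namespace SemiSortedAA

variable {A : Type} {n : ℕ}

/-- `M.Run s r f` : starting in state `s` with remaining (still unread) content `r i`
on the `i`-th tape, the automaton can consume all the remaining content and end in
state `f`, where from a state `s` it reads the next letter of tape `M.tape s`.
This is exactly the existence of a shuffle of the tape contents labelling a path
from `s` to `f` in which every letter originating from the `i`-th tape is read
while the automaton is in a state of `S_i`. -/
inductive Run (M : SemiSortedAA A n) :
    M.State → (Fin n → List (Option A)) → M.State → Prop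
  | nil (s : M.State) : Run M s (fun _ => []) s
  | step {s t f : M.State} {c : Option A} {rest : List (Option A)}
      {r : Fin n → List (Option A)}
      (h : M.step s c = some t)
      (hr : r (M.tape s) = c :: rest)
      (hrun : Run M t (Function.update r (M.tape s) rest) f) :
      Run M s r f

/-- `M` accepts the tuple of words `(w 1, …, w n)` if some shuffle of
`(w 1 $, …, w n $)` labels a path from the start state to an accept state,
each letter from the `i`-th word (including its terminal `$`) being read in `S_i`. -/
def Accepts (M : SemiSortedAA A n) (w : Fin n → List A) : Prop :=
  ∃ f ∈ M.accept, M.Run M.start (fun i => (w i).map some ++ [none]) f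

end SemiSortedAA

/-- An `n`-variable language is quasi-regular if it is the language accepted by some
`n`-tape semi-sorted asynchronous automaton. -/
def IsQuasiRegular {A : Type} {n : ℕ} (L : Set (Fin n → List A)) : Prop :=
  ∃ M : SemiSortedAA A n, ∀ w, w ∈ L ↔ M.Accepts w

/- ### auxiliary development -/

namespace QRAux

open SemiSortedAA

/-- remaining content of a unary tape: `some k` means `a^k $` remains, `none` means empty. -/
def content : Option ℕ → List (Option Unit)
  | none => []
  | some k => List.replicate k (some ()) ++ [none]

def sz : Option ℕ → ℕ
  | none => 0
  | some k => k + 1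

def ct (x y : Option ℕ) : Fin 2 → List (Option Unit) := ![content x, content y]

/-- fueled deterministic evaluation of a 2-tape machine over `Unit` on unary contents. -/
def G (M : SemiSortedAA Unit 2) : ℕ → M.State → Option ℕ → Option ℕ → Option M.State
  | 0, s, x, y => if x = none ∧ y = none then some s else none
  | (f+1), s, x, y =>
    if M.tape s = 0 then
      match x with
      | none => if y = none then some s else none
      | some 0 => (M.step s none).bind (fun t => G M f t none y)
      | some (k+1) => (M.step s (some ())).bind (fun t => G M f t (some k) y)
    else
      match y with
      | none => if x = none then some s else none
      | some 0 => (M.step s none).bind (fun t => G M f t x none)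
      | some (k+1) => (M.step s (some ())).bind (fun t => G M f t x (some k))

def F (M : SemiSortedAA Unit 2) (s : M.State) (x y : Option ℕ) : Option M.State :=
  G M (sz x + sz y) s x y

variable {M : SemiSortedAA Unit 2}

theorem F_nn (s : M.State) : F M s none none = some s := by
  simp [F, sz, G]

theorem F_none_left (s : M.State) (h : M.tape s = 0) (y : Option ℕ) :
    F M s none y = if y = none then some s else none := by
  cases y with
  | none => simp [F, sz, G]
  | some m => simp [F, sz, G, h]

theorem F_none_right (s : M.State) (h : M.tape s ≠ 0) (x : Option ℕ) :
    F M s x none = if x = none then some s else none := by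
  cases x with
  | none => simp [F, sz, G]
  | some m => simp [F, sz, G, h]

theorem F_zero_left (s : M.State) (h : M.tape s = 0) (y : Option ℕ) :
    F M s (some 0) y = (M.step s none).bind (fun t => F M t none y) := by
  have h1 : F M s (some 0) y = G M (sz y + 1) s (some 0) y := by
    simp [F, sz, Nat.add_comm]
  rw [h1, G.eq_def]
  simp only [h, if_pos]
  have h2 : ∀ t, F M t none y = G M (sz y) t none y := by
    intro t; simp [F, sz]
  simp [h2]

theorem F_succ_left (s : M.State) (h : M.tape s = 0) (k : ℕ) (y : Option ℕ) :
    F M s (some (k+1)) y = (M.step s (some ())).bind (fun t => F M t (some k) y) := by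
  have h1 : F M s (some (k+1)) y = G M ((sz (some k) + sz y) + 1) s (some (k+1)) y := by
    have : sz (some (k+1)) + sz y = (sz (some k) + sz y) + 1 := by cases y <;> simp [sz] <;> omega
    rw [F, this]
  rw [h1, G.eq_def]
  simp only [h, if_pos]
  have h2 : ∀ t, F M t (some k) y = G M (sz (some k) + sz y) t (some k) y := by
    intro t; rw [F]
  simp [h2]

theorem F_zero_right (s : M.State) (h : M.tape s ≠ 0) (x : Option ℕ) :
    F M s x (some 0) = (M.step s none).bind (fun t => F M t x none) := by
  have h1 : F M s x (some 0) = G M ((sz x + sz none) + 1) s x (some 0) := by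
    have : sz x + sz (some 0) = (sz x + sz none) + 1 := by simp [sz]
    rw [F, this]
  rw [h1, G.eq_def]
  simp only [h, if_neg, not_false_iff]
  have h2 : ∀ t, F M t x none = G M (sz x + sz none) t x none := by
    intro t; rw [F]
  simp [h2, h]

theorem F_succ_right (s : M.State) (h : M.tape s ≠ 0) (x : Option ℕ) (k : ℕ) :
    F M s x (some (k+1)) = (M.step s (some ())).bind (fun t => F M t x (some k)) := by
  have h1 : F M s x (some (k+1)) = G M ((sz x + sz (some k)) + 1) s x (some (k+1)) := by
    have : sz x + sz (some (k+1)) = (sz x + sz (some k)) + 1 := by simp [sz]; omega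
    rw [F, this]
  rw [h1, G.eq_def]
  simp only [h, if_neg, not_false_iff]
  have h2 : ∀ t, F M t x (some k) = G M (sz x + sz (some k)) t x (some k) := by
    intro t; rw [F]
  simp [h2, h]

theorem fin2_cases (i : Fin 2) : i = 0 ∨ i = 1 := by omega

theorem content_none_iff (x : Option ℕ) : content x = [] ↔ x = none := by
  cases x <;> simp [content]

theorem content_zero : content (some 0) = [none] := by simp [content]

theorem content_succ (k : ℕ) : content (some (k+1)) = some () :: content (some k) := by
  simp [content, List.replicate_succ]

theorem ct_zero (x y : Option ℕ) : ct x y 0 = content x := rfl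

theorem ct_one (x y : Option ℕ) : ct x y 1 = content y := rfl

theorem upd0 {α : Type*} (g : Fin 2 → α) (v : α) :
    Function.update g 0 v = ![v, g 1] := by
  funext i; fin_cases i <;> simp [Function.update]

theorem upd1 {α : Type*} (g : Fin 2 → α) (v : α) :
    Function.update g 1 v = ![g 0, v] := by
  funext i; fin_cases i <;> simp [Function.update]

theorem ct_nil : ct none none = fun _ => [] := by
  funext i; fin_cases i <;> simp [ct, content]

theorem F_to_run :
    ∀ (N : ℕ) (x y : Option ℕ) (s f : M.State),
      sz x + sz y ≤ N → F M s x y = some f → Run M s (ct x y) f := by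
  intro N
  induction N with
  | zero =>
    intro x y s f hle hF
    have hx : x = none := by cases x <;> simp [sz] at hle ⊢
    have hy : y = none := by cases y <;> simp [sz] at hle ⊢
    subst hx; subst hy
    rw [F_nn] at hF
    obtain rfl : s = f := by simpa using hF
    rw [ct_nil]; exact Run.nil s
  | succ N ih =>
    intro x y s f hle hF
    rcases fin2_cases (M.tape s) with h | h
    · cases x with
      | none =>
        rw [F_none_left s h] at hF
        by_cases hy : y = none
        · subst hy
          obtain rfl : s = f := by simpa using hF
          rw [ct_nil]; exact Run.nil s
        · simp [hy] at hF
      | some k =>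
        cases k with
        | zero =>
          rw [F_zero_left s h] at hF
          obtain ⟨t, ht, hFt⟩ : ∃ t, M.step s none = some t ∧ F M t none y = some f := by
            cases hstep : M.step s none with
            | none => rw [hstep] at hF; simp at hF
            | some t => rw [hstep] at hF; exact ⟨t, rfl, by simpa using hF⟩
          refine Run.step (rest := []) ht ?_ ?_
          · rw [h, ct_zero, content_zero]
          · rw [h]
            have : Function.update (ct (some 0) y) 0 ([] : List (Option Unit)) = ct none y := by
              rw [upd0]; rfl
            -- `rest` is []
            rw [show Function.update (ct (some 0) y) (0 : Fin 2) ([] : List (Option Unit)) = ct none y from this]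
            exact ih none y t f (by simp [sz] at hle ⊢; omega) hFt
        | succ k =>
          rw [F_succ_left s h] at hF
          obtain ⟨t, ht, hFt⟩ : ∃ t, M.step s (some ()) = some t ∧ F M t (some k) y = some f := by
            cases hstep : M.step s (some ()) with
            | none => rw [hstep] at hF; simp at hF
            | some t => rw [hstep] at hF; exact ⟨t, rfl, by simpa using hF⟩
          refine Run.step (rest := content (some k)) ht ?_ ?_
          · rw [h, ct_zero, content_succ]
          · rw [h]
            have : Function.update (ct (some (k+1)) y) 0 (content (some k)) = ct (some k) y := by
              rw [upd0]; rfl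
            rw [show Function.update (ct (some (k+1)) y) (0 : Fin 2) (content (some k)) = ct (some k) y from this]
            exact ih (some k) y t f (by simp [sz] at hle ⊢; omega) hFt
    · have h0 : M.tape s ≠ 0 := by rw [h]; decide
      cases y with
      | none =>
        rw [F_none_right s h0] at hF
        by_cases hx : x = none
        · subst hx
          obtain rfl : s = f := by simpa using hF
          rw [ct_nil]; exact Run.nil s
        · simp [hx] at hF
      | some k =>
        cases k with
        | zero =>
          rw [F_zero_right s h0] at hF
          obtain ⟨t, ht, hFt⟩ : ∃ t, M.step s none = some t ∧ F M t x none = some f := by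
            cases hstep : M.step s none with
            | none => rw [hstep] at hF; simp at hF
            | some t => rw [hstep] at hF; exact ⟨t, rfl, by simpa using hF⟩
          refine Run.step (rest := []) ht ?_ ?_
          · rw [h, ct_one, content_zero]
          · rw [h]
            have : Function.update (ct x (some 0)) 1 ([] : List (Option Unit)) = ct x none := by
              rw [upd1]; rfl
            rw [show Function.update (ct x (some 0)) (1 : Fin 2) ([] : List (Option Unit)) = ct x none from this]
            exact ih x none t f (by simp [sz] at hle ⊢; omega) hFt
        | succ k =>
          rw [F_succ_right s h0] at hF
          obtain ⟨t, ht, hFt⟩ : ∃ t, M.step s (some ()) = some t ∧ F M t x (some k) = some f := by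
            cases hstep : M.step s (some ()) with
            | none => rw [hstep] at hF; simp at hF
            | some t => rw [hstep] at hF; exact ⟨t, rfl, by simpa using hF⟩
          refine Run.step (rest := content (some k)) ht ?_ ?_
          · rw [h, ct_one, content_succ]
          · rw [h]
            have : Function.update (ct x (some (k+1))) 1 (content (some k)) = ct x (some k) := by
              rw [upd1]; rfl
            rw [show Function.update (ct x (some (k+1))) (1 : Fin 2) (content (some k)) = ct x (some k) from this]
            exact ih x (some k) t f (by simp [sz] at hle ⊢; omega) hFt

theorem run_to_F {s f : M.State} {r : Fin 2 → List (Option Unit)}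
    (hr : Run M s r f) : ∀ x y, r = ct x y → F M s x y = some f := by
  induction hr with
  | nil s =>
    intro x y hxy
    have hx : x = none := by
      rw [← content_none_iff, ← ct_zero x y, ← hxy]
    have hy : y = none := by
      rw [← content_none_iff (x := y), ← ct_one x y, ← hxy]
    subst hx; subst hy; exact F_nn s
  | @step s t f c rest r hstep hhd hrun ih =>
    intro x y hxy
    subst hxy
    rcases fin2_cases (M.tape s) with h | h
    · rw [h, ct_zero] at hhd
      cases x with
      | none => simp [content] at hhd
      | some k =>
        cases k with
        | zero =>
          rw [content_zero] at hhd
          obtain ⟨rfl, rfl⟩ : c = none ∧ rest = [] := by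
            constructor <;> [exact (List.cons.injEq _ _ _ _ ▸ hhd).1.symm; exact (List.cons.injEq _ _ _ _ ▸ hhd).2.symm]
          rw [F_zero_left s h, hstep, Option.bind_some]
          exact ih none y (by rw [h, upd0]; rfl)
        | succ k =>
          rw [content_succ] at hhd
          obtain ⟨rfl, rfl⟩ : c = some () ∧ rest = content (some k) := by
            constructor <;> [exact (List.cons.injEq _ _ _ _ ▸ hhd).1.symm; exact (List.cons.injEq _ _ _ _ ▸ hhd).2.symm]
          rw [F_succ_left s h, hstep, Option.bind_some]
          exact ih (some k) y (by rw [h, upd0]; rfl)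
    · have h0 : M.tape s ≠ 0 := by rw [h]; decide
      rw [h, ct_one] at hhd
      cases y with
      | none => simp [content] at hhd
      | some k =>
        cases k with
        | zero =>
          rw [content_zero] at hhd
          obtain ⟨rfl, rfl⟩ : c = none ∧ rest = [] := by
            constructor <;> [exact (List.cons.injEq _ _ _ _ ▸ hhd).1.symm; exact (List.cons.injEq _ _ _ _ ▸ hhd).2.symm]
          rw [F_zero_right s h0, hstep, Option.bind_some]
          exact ih x none (by rw [h, upd1]; rfl)
        | succ k =>
          rw [content_succ] at hhd
          obtain ⟨rfl, rfl⟩ : c = some () ∧ rest = content (some k) := by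
            constructor <;> [exact (List.cons.injEq _ _ _ _ ▸ hhd).1.symm; exact (List.cons.injEq _ _ _ _ ▸ hhd).2.symm]
          rw [F_succ_right s h0, hstep, Option.bind_some]
          exact ih x (some k) (by rw [h, upd1]; rfl)

theorem run_iff (s f : M.State) (x y : Option ℕ) :
    Run M s (ct x y) f ↔ F M s x y = some f :=
  ⟨fun h => run_to_F h x y rfl, fun h => F_to_run (sz x + sz y) x y s f le_rfl h⟩

theorem list_unit (l : List Unit) : l = List.replicate l.length () := by
  induction l with
  | nil => rfl
  | cons a t ih => simp [List.replicate_succ]; exact ih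

theorem map_some_unit (l : List Unit) : l.map some = List.replicate l.length (some ()) := by
  induction l with
  | nil => rfl
  | cons a t ih => simp [List.replicate_succ, ih]

theorem input_eq (w : Fin 2 → List Unit) :
    (fun i => (w i).map some ++ [none]) = ct (some (w 0).length) (some (w 1).length) := by
  funext i
  fin_cases i <;> simp [ct, content, map_some_unit]

theorem accepts_iff (M : SemiSortedAA Unit 2) (w : Fin 2 → List Unit) :
    M.Accepts w ↔
      ∃ f ∈ M.accept, F M M.start (some (w 0).length) (some (w 1).length) = some f := by
  unfold SemiSortedAA.Accepts
  rw [input_eq w]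
  exact exists_congr fun f => and_congr_right fun _ => run_iff _ _ _ _

/-! ### the machine for `P = {(w₀,w₁) : |w₁| ≤ |w₀|}` -/

inductive PSt | s1 | s2 | d1 | e | acc
  deriving DecidableEq

instance : Fintype PSt := ⟨{.s1, .s2, .d1, .e, .acc}, by intro x; cases x <;> decide⟩

def Mp : SemiSortedAA Unit 2 where
  State := PSt
  fintype := inferInstance
  start := .s1
  accept := {.acc}
  step := fun s c =>
    match s, c with
    | .s1, some _ => some .s2
    | .s1, none => some .e
    | .s2, some _ => some .s1
    | .s2, none => some .d1
    | .d1, some _ => some .d1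
    | .d1, none => some .acc
    | .e, none => some .acc
    | _, _ => none
  tape := fun s =>
    match s with
    | .s1 => 0
    | .s2 => 1
    | .d1 => 0
    | .e => 1
    | .acc => 0

theorem Fp_d1 (k : ℕ) : F Mp .d1 (some k) none = some .acc := by
  induction k with
  | zero =>
    rw [F_zero_left (M := Mp) .d1 rfl]
    show F Mp .acc none none = some .acc
    exact F_nn _
  | succ k ih =>
    rw [F_succ_left (M := Mp) .d1 rfl]
    exact ih

theorem Fp_main (m n : ℕ) :
    F Mp .s1 (some n) (some m) = if m ≤ n then some .acc else none := by
  induction m generalizing n with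
  | zero =>
    simp only [Nat.zero_le, if_pos]
    cases n with
    | zero =>
      rw [F_zero_left (M := Mp) .s1 rfl]
      show F Mp .e none (some 0) = some .acc
      rw [F_zero_right (M := Mp) .e (by decide)]
      show F Mp .acc none none = some .acc
      exact F_nn _
    | succ n =>
      rw [F_succ_left (M := Mp) .s1 rfl]
      show F Mp .s2 (some n) (some 0) = some .acc
      rw [F_zero_right (M := Mp) .s2 (by decide)]
      show F Mp .d1 (some n) none = some .acc
      exact Fp_d1 n
  | succ m ih =>
    cases n with
    | zero =>
      rw [F_zero_left (M := Mp) .s1 rfl]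
      show F Mp .e none (some (m+1)) = _
      rw [F_succ_right (M := Mp) .e (by decide)]
      show (none : Option PSt) = _
      simp
      rfl
    | succ n =>
      rw [F_succ_left (M := Mp) .s1 rfl]
      show F Mp .s2 (some n) (some (m+1)) = _
      rw [F_succ_right (M := Mp) .s2 (by decide)]
      show F Mp .s1 (some n) (some m) = _
      rw [ih n]
      by_cases h : m ≤ n
      · simp [h, Nat.succ_le_succ h]
      · simp [h, fun hh => h (Nat.le_of_succ_le_succ hh)]

/-! ### the machine for `Q = {(w₀,w₁) : |w₀| ≤ 2|w₁|}` -/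

inductive QSt | v0 | v1 | v2 | v3 | w | acc
  deriving DecidableEq

instance : Fintype QSt := ⟨{.v0, .v1, .v2, .v3, .w, .acc}, by intro x; cases x <;> decide⟩

def Mq : SemiSortedAA Unit 2 where
  State := QSt
  fintype := inferInstance
  start := .v0
  accept := {.acc}
  step := fun s c =>
    match s, c with
    | .v0, some _ => some .v1
    | .v0, none => some .v3
    | .v1, some _ => some .v2
    | .v1, none => some .w
    | .v2, some _ => some .v0
    | .v2, none => some .w
    | .v3, none => some .acc
    | .w, some _ => some .w
    | .w, none => some .acc
    | _, _ => none
  tape := fun s =>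
    match s with
    | .v0 => 1
    | .v1 => 0
    | .v2 => 0
    | .v3 => 0
    | .w => 1
    | .acc => 0

theorem Fq_w (m : ℕ) : F Mq .w none (some m) = some .acc := by
  induction m with
  | zero =>
    rw [F_zero_right (M := Mq) .w (by decide)]
    show F Mq .acc none none = some .acc
    exact F_nn _
  | succ m ih =>
    rw [F_succ_right (M := Mq) .w (by decide)]
    exact ih

theorem Fq_main (m n : ℕ) :
    F Mq .v0 (some n) (some m) = if n ≤ 2 * m then some .acc else none := by
  induction m generalizing n with
  | zero =>
    rw [F_zero_right (M := Mq) .v0 (by decide)]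
    show F Mq .v3 (some n) none = _
    cases n with
    | zero =>
      rw [F_zero_left (M := Mq) .v3 rfl]
      show F Mq .acc none none = _
      erw [F_nn]
      simp
    | succ n =>
      rw [F_succ_left (M := Mq) .v3 rfl]
      show (none : Option QSt) = _
      simp
      rfl
  | succ m ih =>
    rw [F_succ_right (M := Mq) .v0 (by decide)]
    show F Mq .v1 (some n) (some m) = _
    cases n with
    | zero =>
      rw [F_zero_left (M := Mq) .v1 rfl]
      show F Mq .w none (some m) = _
      rw [Fq_w]
      simp
    | succ n =>
      rw [F_succ_left (M := Mq) .v1 rfl]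
      show F Mq .v2 (some n) (some m) = _
      cases n with
      | zero =>
        rw [F_zero_left (M := Mq) .v2 rfl]
        show F Mq .w none (some m) = _
        rw [Fq_w]
        have : 1 ≤ 2 * (m+1) := by omega
        simp [this]
      | succ n =>
        rw [F_succ_left (M := Mq) .v2 rfl]
        show F Mq .v0 (some n) (some m) = _
        rw [ih n]
        by_cases h : n ≤ 2 * m
        · simp [h, show n + 1 + 1 ≤ 2 * (m+1) by omega]
        · simp [h, show ¬(n + 1 + 1 ≤ 2 * (m+1)) by omega]

/-! ### pumping machinery for the negative part -/

variable (M) in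
def traj : ℕ → Option M.State
  | 0 => some M.start
  | t+1 => (traj t).bind fun s => M.step s (some ())

variable (M) in
def AccM (n m : ℕ) : Prop :=
  ∃ f ∈ M.accept, F M M.start (some n) (some m) = some f

theorem F_stuck (s : M.State) (hs : M.step s (some ()) = none) (n m : ℕ) :
    F M s (some (n+1)) (some (m+1)) = none := by
  rcases fin2_cases (M.tape s) with h | h
  · rw [F_succ_left s h, hs]; rfl
  · rw [F_succ_right s (by rw [h]; decide), hs]; rfl

theorem traj_defined (hAcc : ∀ n m, (m ≤ n ∧ n ≤ 2*m) ↔ AccM M n m) :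
    ∀ t, ∃ s n0 m0, traj M t = some s ∧
      ∀ n m, F M M.start (some (n0+n)) (some (m0+m)) = F M s (some n) (some m) := by
  intro t
  induction t with
  | zero => exact ⟨M.start, 0, 0, rfl, fun n m => by simp⟩
  | succ t ih =>
    obtain ⟨s, n0, m0, hs, hF⟩ := ih
    have hg : ∃ s', M.step s (some ()) = some s' := by
      cases hstep : M.step s (some ()) with
      | some s' => exact ⟨s', rfl⟩
      | none =>
        exfalso
        have h1 : AccM M (n0 + (m0+1)) (m0 + (n0+1)) := by
          rw [← hAcc]; omega
        obtain ⟨f, _, hf⟩ := h1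
        rw [hF, F_stuck s hstep] at hf
        cases hf
    obtain ⟨s', hg⟩ := hg
    have hs' : traj M (t+1) = some s' := by
      rw [traj, hs, Option.bind_some, hg]
    rcases fin2_cases (M.tape s) with h | h
    · refine ⟨s', n0 + 1, m0, hs', fun n m => ?_⟩
      have e1 : n0 + 1 + n = n0 + (n + 1) := by omega
      rw [e1, hF (n+1) m, F_succ_left s h, hg, Option.bind_some]
    · refine ⟨s', n0, m0 + 1, hs', fun n m => ?_⟩
      have e1 : m0 + 1 + m = m0 + (m + 1) := by omega
      rw [e1, hF n (m+1), F_succ_right s (by rw [h]; decide), hg, Option.bind_some]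

variable (M) in
def cnt0 (st : ℕ → M.State) (t : ℕ) : ℕ :=
  ((Finset.range t).filter (fun u => M.tape (st u) = 0)).card

variable (M) in
def cnt1 (st : ℕ → M.State) (t : ℕ) : ℕ :=
  ((Finset.range t).filter (fun u => ¬ M.tape (st u) = 0)).card

theorem cnt_sum (st : ℕ → M.State) (t : ℕ) : cnt0 M st t + cnt1 M st t = t := by
  rw [cnt0, cnt1, Finset.card_filter_add_card_filter_not]
  exact Finset.card_range t

theorem cnt0_succ (st : ℕ → M.State) (t : ℕ) :
    cnt0 M st (t+1) = cnt0 M st t + (if M.tape (st t) = 0 then 1 else 0) := by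
  rw [cnt0, cnt0, Finset.range_add_one, Finset.filter_insert]
  split <;> simp [Finset.card_insert_of_notMem, Finset.notMem_range_self]

theorem cnt1_succ (st : ℕ → M.State) (t : ℕ) :
    cnt1 M st (t+1) = cnt1 M st t + (if M.tape (st t) = 0 then 0 else 1) := by
  rw [cnt1, cnt1, Finset.range_add_one, Finset.filter_insert]
  split <;> rename_i hsplit
  · have hnm : (t : ℕ) ∉ (Finset.range t).filter (fun u => ¬ M.tape (st u) = 0) :=
      fun hmem => Finset.notMem_range_self (Finset.mem_of_mem_filter _ hmem)
    rw [Finset.card_insert_of_notMem hnm]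
  · rw [if_pos (not_not.mp hsplit)]; omega

theorem transfer (st : ℕ → M.State)
    (hst : ∀ t, M.step (st t) (some ()) = some (st (t+1))) (t : ℕ) :
    ∀ n m, F M (st 0) (some (cnt0 M st t + n)) (some (cnt1 M st t + m)) =
      F M (st t) (some n) (some m) := by
  induction t with
  | zero => intro n m; simp [cnt0, cnt1]
  | succ t ih =>
    intro n m
    rcases fin2_cases (M.tape (st t)) with h | h
    · have e0 : cnt0 M st (t+1) + n = cnt0 M st t + (n + 1) := by
        rw [cnt0_succ, if_pos h]; omega
      have e1 : cnt1 M st (t+1) + m = cnt1 M st t + m := by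
        rw [cnt1_succ, if_pos h]; omega
      rw [e0, e1, ih (n+1) m, F_succ_left (st t) h, hst t, Option.bind_some]
    · have h0 : M.tape (st t) ≠ 0 := by rw [h]; decide
      have e0 : cnt0 M st (t+1) + n = cnt0 M st t + n := by
        rw [cnt0_succ, if_neg h0]; omega
      have e1 : cnt1 M st (t+1) + m = cnt1 M st t + (m + 1) := by
        rw [cnt1_succ, if_neg h0]; omega
      rw [e0, e1, ih n (m+1), F_succ_right (st t) h0, hst t, Option.bind_some]

/-- the main negative lemma -/
theorem not_qr (hAcc : ∀ n m, (m ≤ n ∧ n ≤ 2*m) ↔ AccM M n m) : False := by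
  letI : Fintype M.State := M.fintype
  have hdef := traj_defined hAcc
  -- canonical trajectory
  have hst : ∀ t, ∃ s, traj M t = some s := fun t => by
    obtain ⟨s, _, _, hs, _⟩ := hdef t; exact ⟨s, hs⟩
  choose st hsttr using hst
  have hstep : ∀ t, M.step (st t) (some ()) = some (st (t+1)) := by
    intro t
    have h1 := hsttr (t+1)
    rw [traj, hsttr t, Option.bind_some] at h1
    exact h1
  have hst0 : st 0 = M.start := by
    have := hsttr 0
    rw [traj] at this
    exact (Option.some_inj.mp this).symm
  -- pigeonhole
  obtain ⟨i, j, hij, hmap⟩ :=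
    Fintype.exists_ne_map_eq_of_card_lt
      (fun i : Fin (Fintype.card M.State + 1) => st i.val) (by simp)
  -- wlog i < j
  obtain ⟨t0, t1, ht01, heq⟩ : ∃ t0 t1 : ℕ, t0 < t1 ∧ st t0 = st t1 := by
    rcases lt_or_gt_of_ne (fun h : (i : Fin _) = j => hij h) with h | h
    · exact ⟨i.val, j.val, h, hmap⟩
    · exact ⟨j.val, i.val, h, hmap.symm⟩
  -- the shifted trajectory
  set st' : ℕ → M.State := fun u => st (t0 + u) with hst'
  have hstep' : ∀ t, M.step (st' t) (some ()) = some (st' (t+1)) := by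
    intro t
    have := hstep (t0 + t)
    simpa [hst', Nat.add_assoc] using this
  set a0 := cnt0 M st t0
  set a1 := cnt1 M st t0
  set b0 := cnt0 M st' (t1 - t0)
  set b1 := cnt1 M st' (t1 - t0)
  have hb : 1 ≤ b0 + b1 := by
    have := cnt_sum st' (t1 - t0)
    omega
  have key : ∀ n m, F M M.start (some (a0 + n)) (some (a1 + m)) =
      F M M.start (some (a0 + b0 + n)) (some (a1 + b1 + m)) := by
    intro n m
    have h1 := transfer st hstep t0 n m
    have h2 := transfer st hstep t0 (b0 + n) (b1 + m)
    have h3 := transfer st' hstep' (t1 - t0) n m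
    have hse : st' (t1 - t0) = st t0 := by
      show st (t0 + (t1 - t0)) = st t0
      rw [show t0 + (t1 - t0) = t1 from by omega, ← heq]
    have hs0 : st' 0 = st t0 := rfl
    rw [hst0] at h1 h2
    rw [hs0, hse] at h3
    calc F M M.start (some (a0 + n)) (some (a1 + m))
        = F M (st t0) (some n) (some m) := h1
      _ = F M (st t0) (some (b0 + n)) (some (b1 + m)) := h3.symm
      _ = F M M.start (some (a0 + (b0 + n))) (some (a1 + (b1 + m))) := h2.symm
      _ = F M M.start (some (a0 + b0 + n)) (some (a1 + b1 + m)) := by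
          rw [Nat.add_assoc, Nat.add_assoc]
  have HA : ∀ n m, ((a1 + m ≤ a0 + n) ∧ (a0 + n ≤ 2*(a1 + m))) ↔
      ((a1 + b1 + m ≤ a0 + b0 + n) ∧ (a0 + b0 + n ≤ 2*(a1 + b1 + m))) := by
    intro n m
    rw [hAcc (a0 + n) (a1 + m), hAcc (a0 + b0 + n) (a1 + b1 + m)]
    unfold AccM
    rw [key n m]
  have H1 := HA (a1 + 1 + b0) (a0 + 2 + b0)
  have H2 := HA a1 a0
  have H3 := HA (a0 + 2*a1 + 1) a0
  omega

end QRAux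

open QRAux

/-- Quasi-regular languages are not closed under intersection: there are a finite
alphabet `A` and quasi-regular two-variable languages `P`, `Q` over `A` whose
intersection is not quasi-regular. -/
theorem quasiRegular_not_closed_under_inter :
    ∃ (A : Type) (_ : Fintype A) (P Q : Set (Fin 2 → List A)),
      IsQuasiRegular P ∧ IsQuasiRegular Q ∧ ¬ IsQuasiRegular (P ∩ Q) := by
  refine ⟨Unit, inferInstance,
    {w | (w 1).length ≤ (w 0).length},
    {w | (w 0).length ≤ 2 * (w 1).length}, ?_, ?_, ?_⟩
  · refine ⟨Mp, fun w => ?_⟩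
    rw [accepts_iff]
    simp only [Set.mem_setOf_eq]
    have hmain := Fp_main (w 1).length (w 0).length
    constructor
    · intro h
      exact ⟨.acc, rfl, by
        rw [show Mp.start = PSt.s1 from rfl, hmain, if_pos h]⟩
    · rintro ⟨f, hf, hF⟩
      rw [show Mp.start = PSt.s1 from rfl, hmain] at hF
      by_contra hc
      rw [if_neg hc] at hF
      cases hF
  · refine ⟨Mq, fun w => ?_⟩
    rw [accepts_iff]
    simp only [Set.mem_setOf_eq]
    have hmain := Fq_main (w 1).length (w 0).length
    constructor
    · intro h
      exact ⟨.acc, rfl, by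
        rw [show Mq.start = QSt.v0 from rfl, hmain, if_pos h]⟩
    · rintro ⟨f, hf, hF⟩
      rw [show Mq.start = QSt.v0 from rfl, hmain] at hF
      by_contra hc
      rw [if_neg hc] at hF
      cases hF
  · rintro ⟨M, hM⟩
    apply not_qr (M := M)
    intro n m
    have h := hM ![List.replicate n (), List.replicate m ()]
    rw [accepts_iff] at h
    simp only [Set.mem_inter_iff, Set.mem_setOf_eq, Matrix.cons_val_zero,
      Matrix.cons_val_one, Matrix.head_cons, List.length_replicate] at h
    exact h
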